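/- For arbitrary input |φ⟩ = α|0⟩ + β|1⟩, the cloner output expanded in Bell states of (clone 2, ancilla) reads U|φ⟩|00⟩ = (√3/2)(α|0⟩+β|1⟩)|ψ⁻⟩ + (1/√12)(α|0⟩−β|1⟩)|ψ⁺⟩ + (1/√12)(β|0⟩−α|1⟩)|φ⁺⟩ − (1/√12)(β|0⟩+α|1⟩)|φ⁻⟩, where the first qubit is clone 1. Hence a Bell measurement on clone 2 and the ancilla yields outcome ψ⁻ with probability 3/4 and each symmetric Bell state with probability 1/12, and in every case a suitable unitary on clone 1 (I, σ_z, −iσ_y, −σ_x respectively) restores the input state |φ⟩ deterministically. -/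
import Mathlib


open scoped ComplexConjugate ComplexOrder
open Finset Matrix

noncomputable section

/-- Index set for three qubits: (clone 1, clone 2, ancilla). -/
abbrev I3 := Fin 2 × Fin 2 × Fin 2

/-- Image of |0⟩|00⟩ under the universal 1→2 cloner:
    √(2/3)|00⟩|1⟩ − (1/√6)(|01⟩+|10⟩)|0⟩. -/
def out0 : I3 → ℂ := fun p =>
  if p = (0, 0, 1) then ((Real.sqrt (2/3) : ℝ) : ℂ)
  else if p = (0, 1, 0) then -(((1 / Real.sqrt 6 : ℝ)) : ℂ)
  else if p = (1, 0, 0) then -(((1 / Real.sqrt 6 : ℝ)) : ℂ)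
  else 0

/-- Image of |1⟩|00⟩ under the universal 1→2 cloner:
    −√(2/3)|11⟩|0⟩ + (1/√6)(|10⟩+|01⟩)|1⟩. -/
def out1 : I3 → ℂ := fun p =>
  if p = (1, 1, 0) then -((Real.sqrt (2/3) : ℝ) : ℂ)
  else if p = (1, 0, 1) then (((1 / Real.sqrt 6 : ℝ)) : ℂ)
  else if p = (0, 1, 1) then (((1 / Real.sqrt 6 : ℝ)) : ℂ)
  else 0

/-- Output of the cloner on input α|0⟩+β|1⟩. -/
def cloneOut (α β : ℂ) : I3 → ℂ := fun p => α * out0 p + β * out1 p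

/-- Output density matrix U(|φ⟩⟨φ| ⊗ |00⟩⟨00|)U†. -/
def rhoOut (α β : ℂ) : Matrix I3 I3 ℂ :=
  Matrix.of fun p q => cloneOut α β p * conj (cloneOut α β q)

/-- Reduced state of the first clone. -/
def rhoC (α β : ℂ) : Matrix (Fin 2) (Fin 2) ℂ :=
  Matrix.of fun i j => ∑ b : Fin 2, ∑ c : Fin 2, rhoOut α β (i, b, c) (j, b, c)

/-- Reduced state of the ancilla. -/
def rhoA (α β : ℂ) : Matrix (Fin 2) (Fin 2) ℂ :=
  Matrix.of fun i j => ∑ a : Fin 2, ∑ b : Fin 2, rhoOut α β (a, b, i) (a, b, j)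

/-- Reduced state of the two clones. -/
def rhoCC (α β : ℂ) : Matrix (Fin 2 × Fin 2) (Fin 2 × Fin 2) ℂ :=
  Matrix.of fun p q => ∑ c : Fin 2, rhoOut α β (p.1, p.2, c) (q.1, q.2, c)

def σx : Matrix (Fin 2) (Fin 2) ℂ := !![0, 1; 1, 0]
def σy : Matrix (Fin 2) (Fin 2) ℂ := !![0, -Complex.I; Complex.I, 0]
def σz : Matrix (Fin 2) (Fin 2) ℂ := !![1, 0; 0, -1]

/-- s·σ for a real 3-vector s. -/
def pauliDot (s : Fin 3 → ℝ) : Matrix (Fin 2) (Fin 2) ℂ :=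
  ((s 0 : ℝ) : ℂ) • σx + ((s 1 : ℝ) : ℂ) • σy + ((s 2 : ℝ) : ℂ) • σz

/-- (1/2)(I + s·σ), the state with Bloch vector s. -/
def blochMat (s : Fin 3 → ℝ) : Matrix (Fin 2) (Fin 2) ℂ :=
  (1/2 : ℂ) • (1 + pauliDot s)

def φvec (α β : ℂ) : Fin 2 → ℂ := ![α, β]

/-- Outer product |v⟩⟨v| on a qubit. -/
def outer (v : Fin 2 → ℂ) : Matrix (Fin 2) (Fin 2) ℂ :=
  Matrix.of fun i j => v i * conj (v j)

/-- The images U(|i⟩|00⟩) of the two input basis states. -/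
def Uout : Fin 2 → I3 → ℂ := ![out0, out1]

/-- Effective operator on the input qubit corresponding to an operator F on the output:
    E i j = ⟨U(|i⟩|00⟩)| F |U(|j⟩|00⟩)⟩ = (⟨00|_{ba} U† F U |00⟩_{ba}) i j. -/
def effOf (F : Matrix I3 I3 ℂ) : Matrix (Fin 2) (Fin 2) ℂ :=
  Matrix.of fun i j => ∑ p : I3, ∑ q : I3, conj (Uout i p) * F p q * Uout j q

/-- F ⊗ I ⊗ I: a measurement on the first clone only. -/
def extC (F : Matrix (Fin 2) (Fin 2) ℂ) : Matrix I3 I3 ℂ :=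
  Matrix.of fun p q => F p.1 q.1 * (if p.2 = q.2 then 1 else 0)

/-- I ⊗ I ⊗ F: a measurement on the ancilla only. -/
def extA (F : Matrix (Fin 2) (Fin 2) ℂ) : Matrix I3 I3 ℂ :=
  Matrix.of fun p q => (if (p.1, p.2.1) = (q.1, q.2.1) then 1 else 0) * F p.2.2 q.2.2

/-- F ⊗ I_ancilla: a measurement on the two clones. -/
def extCC (F : Matrix (Fin 2 × Fin 2) (Fin 2 × Fin 2) ℂ) : Matrix I3 I3 ℂ :=
  Matrix.of fun p q => F (p.1, p.2.1) (q.1, q.2.1) * (if p.2.2 = q.2.2 then 1 else 0)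

/-- Bell basis on two qubits, in the order φ⁺, ψ⁺, φ⁻, ψ⁻. -/
def bell : Fin 4 → (Fin 2 × Fin 2) → ℂ :=
  ![fun p => if p = (0,0) then ((1 / Real.sqrt 2 : ℝ) : ℂ)
             else if p = (1,1) then ((1 / Real.sqrt 2 : ℝ) : ℂ) else 0,
    fun p => if p = (0,1) then ((1 / Real.sqrt 2 : ℝ) : ℂ)
             else if p = (1,0) then ((1 / Real.sqrt 2 : ℝ) : ℂ) else 0,
    fun p => if p = (0,0) then ((1 / Real.sqrt 2 : ℝ) : ℂ)
             else if p = (1,1) then -((1 / Real.sqrt 2 : ℝ) : ℂ) else 0,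
    fun p => if p = (0,1) then ((1 / Real.sqrt 2 : ℝ) : ℂ)
             else if p = (1,0) then -((1 / Real.sqrt 2 : ℝ) : ℂ) else 0]

/-- Kronecker product of two single-qubit matrices. -/
def kron2 (A B : Matrix (Fin 2) (Fin 2) ℂ) : Matrix (Fin 2 × Fin 2) (Fin 2 × Fin 2) ℂ :=
  Matrix.of fun p q => A p.1 q.1 * B p.2 q.2

/-- Projector onto the symmetric subspace of two qubits: I − |ψ⁻⟩⟨ψ⁻|. -/
def symProj : Matrix (Fin 2 × Fin 2) (Fin 2 × Fin 2) ℂ :=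
  1 - Matrix.of fun p q => bell 3 p * conj (bell 3 q)

/-- Projector onto the antisymmetric subspace: |ψ⁻⟩⟨ψ⁻|. -/
def antiProj : Matrix (Fin 2 × Fin 2) (Fin 2 × Fin 2) ℂ :=
  Matrix.of fun p q => bell 3 p * conj (bell 3 q)

/-- Computational basis vector |abc⟩ of three qubits. -/
def e3 (a b c : Fin 2) : I3 → ℂ := fun p => if p = (a, b, c) then 1 else 0

/-- ∑ₚ conj(v p) w p, the inner product on three qubits. -/
def inner3 (v w : I3 → ℂ) : ℂ := ∑ p : I3, conj (v p) * w p

/-- Unnormalized conditional state of clone 1 after Bell outcome k on (clone 2, ancilla). -/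
def condCA (α β : ℂ) (k : Fin 4) : Fin 2 → ℂ :=
  fun i => ∑ b : Fin 2, ∑ c : Fin 2, conj (bell k (b, c)) * cloneOut α β (i, b, c)

lemma sq2' : Real.sqrt 2 ^ 2 = 2 := Real.sq_sqrt (by norm_num)
lemma sq3' : Real.sqrt 3 ^ 2 = 3 := Real.sq_sqrt (by norm_num)
lemma h23' : Real.sqrt (2/3) = 3⁻¹ * (Real.sqrt 2 * Real.sqrt 3) := by
  rw [show (3:ℝ)⁻¹ * (Real.sqrt 2 * Real.sqrt 3) = Real.sqrt 2 * Real.sqrt 3 / 3 by ring]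
  rw [show (2/3:ℝ) = (Real.sqrt 2 * Real.sqrt 3 / 3)^2 from by
    rw [div_pow, mul_pow, sq2', sq3']; norm_num]
  exact Real.sqrt_sq (by positivity)
lemma h6' : (Real.sqrt 6)⁻¹ = 6⁻¹ * (Real.sqrt 2 * Real.sqrt 3) := by
  rw [show (6:ℝ)⁻¹ * (Real.sqrt 2 * Real.sqrt 3) = Real.sqrt 2 * Real.sqrt 3 / 6 by ring]
  have h : Real.sqrt 6 = Real.sqrt 2 * Real.sqrt 3 := by
    rw [show (6:ℝ) = 2*3 by norm_num, Real.sqrt_mul (by norm_num)]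
  have h0 : Real.sqrt 2 * Real.sqrt 3 > 0 := by positivity
  rw [h]; field_simp; try nlinarith [sq2', sq3']
lemma h12' : (Real.sqrt 12)⁻¹ = 6⁻¹ * Real.sqrt 3 := by
  rw [show (6:ℝ)⁻¹ * Real.sqrt 3 = Real.sqrt 3 / 6 by ring]
  have h : Real.sqrt 12 = 2 * Real.sqrt 3 := by
    rw [show (12:ℝ) = 2^2*3 by norm_num, Real.sqrt_mul (by positivity), Real.sqrt_sq (by norm_num)]
  have h0 : Real.sqrt 3 > 0 := by positivity
  rw [h]; field_simp; try nlinarith [sq3']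
lemma h2'' : (Real.sqrt 2)⁻¹ = 2⁻¹ * Real.sqrt 2 := by
  rw [show (2:ℝ)⁻¹ * Real.sqrt 2 = Real.sqrt 2 / 2 by ring]
  have h0 : Real.sqrt 2 > 0 := by positivity
  field_simp; try nlinarith [sq2']
lemma h3'' : (Real.sqrt 3)⁻¹ = 3⁻¹ * Real.sqrt 3 := by
  rw [show (3:ℝ)⁻¹ * Real.sqrt 3 = Real.sqrt 3 / 3 by ring]
  have h0 : Real.sqrt 3 > 0 := by positivity
  field_simp; try nlinarith [sq3']
lemma cL0 : ((Real.sqrt (2/3) : ℝ) : ℂ) = 3⁻¹ * (((Real.sqrt 2:ℝ):ℂ) * ((Real.sqrt 3:ℝ):ℂ)) := by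
  rw [h23']; push_cast; ring
lemma cL1 : (((Real.sqrt 6 : ℝ) : ℂ))⁻¹ = 6⁻¹ * (((Real.sqrt 2:ℝ):ℂ) * ((Real.sqrt 3:ℝ):ℂ)) := by
  rw [← Complex.ofReal_inv, h6']; push_cast; ring
lemma cL2 : (((Real.sqrt 12 : ℝ) : ℂ))⁻¹ = 6⁻¹ * ((Real.sqrt 3:ℝ):ℂ) := by
  rw [← Complex.ofReal_inv, h12']; push_cast; ring
lemma cL3 : (((Real.sqrt 2 : ℝ) : ℂ))⁻¹ = 2⁻¹ * ((Real.sqrt 2:ℝ):ℂ) := by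
  rw [← Complex.ofReal_inv, h2'']; push_cast; ring
lemma cL4 : (((Real.sqrt 3 : ℝ) : ℂ))⁻¹ = 3⁻¹ * ((Real.sqrt 3:ℝ):ℂ) := by
  rw [← Complex.ofReal_inv, h3'']; push_cast; ring

set_option maxHeartbeats 2000000 in
/-- the cloner output expanded in Bell states of (clone 2, ancilla) is
(√3/2)|φ⟩ψ⁻ + (1/√12)(α|0⟩−β|1⟩)ψ⁺ + (1/√12)(β|0⟩−α|1⟩)φ⁺ − (1/√12)(β|0⟩+α|1⟩)φ⁻;
outcome ψ⁻ has probability 3/4, each symmetric Bell state 1/12, and I, σ_z, −iσ_y, −σ_x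
respectively restore |φ⟩ on clone 1. -/
theorem bell_measurement_restores_clone (α β : ℂ)
    (hnorm : Complex.normSq α + Complex.normSq β = 1) :
    (∀ p : I3, cloneOut α β p =
      ((Real.sqrt 3 / 2 : ℝ) : ℂ) * (φvec α β p.1) * bell 3 (p.2.1, p.2.2) +
      ((1 / Real.sqrt 12 : ℝ) : ℂ) * (![α, -β] p.1) * bell 1 (p.2.1, p.2.2) +
      ((1 / Real.sqrt 12 : ℝ) : ℂ) * (![β, -α] p.1) * bell 0 (p.2.1, p.2.2) -
      ((1 / Real.sqrt 12 : ℝ) : ℂ) * (![β, α] p.1) * bell 2 (p.2.1, p.2.2)) ∧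
    (∑ i : Fin 2, Complex.normSq (condCA α β 3 i) = 3/4) ∧
    (∀ k : Fin 4, k ≠ 3 → ∑ i : Fin 2, Complex.normSq (condCA α β k i) = 1/12) ∧
    condCA α β 3 = ((Real.sqrt 3 / 2 : ℝ) : ℂ) • φvec α β ∧
    σz.mulVec (condCA α β 1) = ((1 / Real.sqrt 12 : ℝ) : ℂ) • φvec α β ∧
    (-(Complex.I • σy)).mulVec (condCA α β 0) = ((1 / Real.sqrt 12 : ℝ) : ℂ) • φvec α β ∧
    (-σx).mulVec (condCA α β 2) = ((1 / Real.sqrt 12 : ℝ) : ℂ) • φvec α β := by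
  have hA : ((Real.sqrt 2 : ℝ) : ℂ)^2 = 2 := by exact_mod_cast sq2'
  have hB : ((Real.sqrt 3 : ℝ) : ℂ)^2 = 3 := by exact_mod_cast sq3'
  have hc3 : condCA α β 3 = fun i => ((Real.sqrt 3 / 2 : ℝ) : ℂ) * φvec α β i := by
    funext i; fin_cases i <;>
      ( simp (config := { decide := true }) [condCA, bell, cloneOut, out0, out1, φvec,
          Fin.sum_univ_two, Complex.conj_ofReal, map_inv₀, map_ofNat, map_div₀, _root_.map_mul, Complex.ofReal_inv, Complex.ofReal_div, div_eq_mul_inv,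
          h23', h6', h12', h2'', h3'', cL0, cL1, cL2, cL3, cL4]
        try simp only [Complex.ofReal_inv, Complex.ofReal_div, div_eq_mul_inv, cL0, cL1, cL2, cL3, cL4]
        try ring_nf
        try simp only [hA, hB]
        try ring_nf
        try ring )
  have hc1 : condCA α β 1 = fun i => (((Real.sqrt 3 / 6 : ℝ)) : ℂ) * ![α, -β] i := by
    funext i; fin_cases i <;>
      ( simp (config := { decide := true }) [condCA, bell, cloneOut, out0, out1, φvec,
          Fin.sum_univ_two, Complex.conj_ofReal, map_inv₀, map_ofNat, map_div₀, _root_.map_mul, Complex.ofReal_inv, Complex.ofReal_div, div_eq_mul_inv,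
          h23', h6', h12', h2'', h3'', cL0, cL1, cL2, cL3, cL4]
        try simp only [Complex.ofReal_inv, Complex.ofReal_div, div_eq_mul_inv, cL0, cL1, cL2, cL3, cL4]
        try ring_nf
        try simp only [hA, hB]
        try ring_nf
        try ring )
  have hc0 : condCA α β 0 = fun i => (((Real.sqrt 3 / 6 : ℝ)) : ℂ) * ![β, -α] i := by
    funext i; fin_cases i <;>
      ( simp (config := { decide := true }) [condCA, bell, cloneOut, out0, out1, φvec,
          Fin.sum_univ_two, Complex.conj_ofReal, map_inv₀, map_ofNat, map_div₀, _root_.map_mul, Complex.ofReal_inv, Complex.ofReal_div, div_eq_mul_inv,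
          h23', h6', h12', h2'', h3'', cL0, cL1, cL2, cL3, cL4]
        try simp only [Complex.ofReal_inv, Complex.ofReal_div, div_eq_mul_inv, cL0, cL1, cL2, cL3, cL4]
        try ring_nf
        try simp only [hA, hB]
        try ring_nf
        try ring )
  have hc2 : condCA α β 2 = fun i => -(((Real.sqrt 3 / 6 : ℝ)) : ℂ) * ![β, α] i := by
    funext i; fin_cases i <;>
      ( simp (config := { decide := true }) [condCA, bell, cloneOut, out0, out1, φvec,
          Fin.sum_univ_two, Complex.conj_ofReal, map_inv₀, map_ofNat, map_div₀, _root_.map_mul, Complex.ofReal_inv, Complex.ofReal_div, div_eq_mul_inv,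
          h23', h6', h12', h2'', h3'', cL0, cL1, cL2, cL3, cL4]
        try simp only [Complex.ofReal_inv, Complex.ofReal_div, div_eq_mul_inv, cL0, cL1, cL2, cL3, cL4]
        try ring_nf
        try simp only [hA, hB]
        try ring_nf
        try ring )
  have h1112 : ((1 / Real.sqrt 12 : ℝ) : ℂ) = ((Real.sqrt 3 / 6 : ℝ) : ℂ) := by
    norm_cast; rw [one_div, h12']; ring
  refine ⟨?_, ?_, ?_, ?_, ?_, ?_, ?_⟩
  · rintro ⟨a, b, c⟩
    fin_cases a <;> fin_cases b <;> fin_cases c <;>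
      ( simp (config := { decide := true }) [condCA, bell, cloneOut, out0, out1, φvec,
          Fin.sum_univ_two, Complex.conj_ofReal, map_inv₀, map_ofNat, map_div₀, _root_.map_mul, Complex.ofReal_inv, Complex.ofReal_div, div_eq_mul_inv,
          h23', h6', h12', h2'', h3'', cL0, cL1, cL2, cL3, cL4]
        try simp only [Complex.ofReal_inv, Complex.ofReal_div, div_eq_mul_inv, cL0, cL1, cL2, cL3, cL4]
        try ring_nf
        try simp only [hA, hB]
        try ring_nf
        try ring )
  · rw [hc3]
    simp [Fin.sum_univ_two, φvec, Complex.normSq_mul, Complex.normSq_ofReal]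
    try nlinarith [sq3', hnorm]
  · intro k hk
    fin_cases k
    · show ∑ i : Fin 2, Complex.normSq (condCA α β 0 i) = 1 / 12
      rw [hc0]
      simp [Fin.sum_univ_two, Complex.normSq_mul, Complex.normSq_ofReal]
      try nlinarith [sq3', hnorm]
    · show ∑ i : Fin 2, Complex.normSq (condCA α β 1 i) = 1 / 12
      rw [hc1]
      simp [Fin.sum_univ_two, Complex.normSq_mul, Complex.normSq_ofReal]
      try nlinarith [sq3', hnorm]
    · show ∑ i : Fin 2, Complex.normSq (condCA α β 2 i) = 1 / 12
      rw [hc2]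
      simp [Fin.sum_univ_two, Complex.normSq_mul, Complex.normSq_ofReal]
      try nlinarith [sq3', hnorm]
    · simp at hk
  · rw [hc3]; funext i; simp [φvec]
  · rw [hc1, h1112]; funext i; fin_cases i <;>
      (simp [Matrix.mulVec, Matrix.vecHead, Matrix.vecTail, σz, Fin.sum_univ_two, φvec]; try ring)
  · rw [hc0, h1112]; funext i; fin_cases i <;>
      (simp [Matrix.mulVec, Matrix.vecHead, Matrix.vecTail, σy, Fin.sum_univ_two, φvec]; try ring)
  · rw [hc2, h1112]; funext i; fin_cases i <;>
      (simp [Matrix.mulVec, Matrix.vecHead, Matrix.vecTail, σx, Fin.sum_univ_two, φvec]; try ring)
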